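/- arXiv:1403.0114 — 2 statements merged into one kernel-verified Lean document; each statement's English description precedes it below -/
import Mathlib

section
/- For every bounded open set Ω ⊂ ℝ^d, λ₁(Ω)·T(Ω) ≤ |Ω|, where λ₁(Ω) is the first Dirichlet eigenvalue of the Laplacian on Ω, T(Ω) is the torsional rigidity, and |Ω| is the Lebesgue measure. -/
open MeasureTheory Metric Set

/-- The first Dirichlet eigenvalue of the Laplacian on `Ω`, defined variationally as the
infimum of the Rayleigh quotient over nonzero `C¹` functions compactly supported in `Ω`. -/
noncomputable def dirichletEigenvalue1 {E : Type*} [NormedAddCommGroup E] [NormedSpace ℝ E]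
    [MeasureSpace E] (Ω : Set E) : ℝ :=
  sInf {r : ℝ | ∃ u : E → ℝ, ContDiff ℝ 1 u ∧ HasCompactSupport u ∧ tsupport u ⊆ Ω ∧
    (∫ x, (u x) ^ 2) ≠ 0 ∧ r = (∫ x, ‖fderiv ℝ u x‖ ^ 2) / (∫ x, (u x) ^ 2)}

/-- The torsional rigidity of `Ω`: `T(Ω) = -2 E₁(Ω)` where `E₁(Ω)` is the Dirichlet
energy `inf { ∫ (|∇u|²/2 - u) : u ∈ H¹₀(Ω) }`, here realized via `C¹` functions
compactly supported in `Ω`. -/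
noncomputable def torsionalRigidity {E : Type*} [NormedAddCommGroup E] [NormedSpace ℝ E]
    [MeasureSpace E] (Ω : Set E) : ℝ :=
  -2 * sInf {r : ℝ | ∃ u : E → ℝ, ContDiff ℝ 1 u ∧ HasCompactSupport u ∧ tsupport u ⊆ Ω ∧
    r = ∫ x, (‖fderiv ℝ u x‖ ^ 2 / 2 - u x)}

lemma cs_aux {d : ℕ} {Ω : Set (EuclideanSpace ℝ (Fin d))} (hΩ : IsOpen Ω)
    (hb : Bornology.IsBounded Ω) {u : EuclideanSpace ℝ (Fin d) → ℝ}
    (hu : Continuous u) (hcs : HasCompactSupport u) (hsup : tsupport u ⊆ Ω) :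
    (∫ x, u x) ^ 2 ≤ (volume Ω).toReal * ∫ x, (u x) ^ 2 := by
  have hmeas : MeasurableSet Ω := hΩ.measurableSet
  have hVfin : volume Ω ≠ ⊤ := hb.measure_lt_top.ne
  have hV0 : (0:ℝ) ≤ (volume Ω).toReal := ENNReal.toReal_nonneg
  have hpq : Real.HolderConjugate 2 2 := Real.holderConjugate_iff.mpr ⟨one_lt_two, by norm_num⟩
  have huz : ∀ x ∉ Ω, u x = 0 := by
    intro x hx
    by_contra h
    exact hx (hsup (subset_tsupport u h))
  have hf : MemLp (fun x => |u x|) (ENNReal.ofReal 2) volume := by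
    rw [ENNReal.ofReal_ofNat]
    exact (hu.abs).memLp_of_hasCompactSupport hcs.abs
  have hg : MemLp (Ω.indicator (fun _ => (1:ℝ))) (ENNReal.ofReal 2) volume := by
    rw [ENNReal.ofReal_ofNat]
    exact memLp_indicator_const 2 hmeas 1 (Or.inr hVfin)
  have hold := integral_mul_le_Lp_mul_Lq_of_nonneg hpq
    (Filter.Eventually.of_forall fun x => abs_nonneg (u x))
    (Filter.Eventually.of_forall fun x => Set.indicator_nonneg (fun _ _ => zero_le_one) x)
    hf hg
  have h1 : (∫ x, |u x| * (Ω.indicator (fun _ => (1:ℝ))) x) = ∫ x, |u x| := by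
    congr 1; funext x
    by_cases hx : x ∈ Ω
    · simp [hx]
    · simp [hx, huz x hx]
  have h2 : (∫ x, |u x| ^ (2:ℝ)) = ∫ x, (u x)^2 := by
    congr 1; funext x
    rw [show ((2:ℝ)) = ((2:ℕ):ℝ) by norm_num, Real.rpow_natCast]
    exact sq_abs (u x)
  have h3 : (∫ x, (Ω.indicator (fun _ => (1:ℝ))) x ^ (2:ℝ)) = (volume Ω).toReal := by
    have : ∀ x, (Ω.indicator (fun _ => (1:ℝ))) x ^ (2:ℝ)
        = (Ω.indicator (fun _ => (1:ℝ))) x := by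
      intro x
      by_cases hx : x ∈ Ω <;> simp [hx]
    rw [show (fun x => (Ω.indicator (fun _ => (1:ℝ))) x ^ (2:ℝ))
        = Ω.indicator (fun _ => (1:ℝ)) from funext this]
    simp [integral_indicator hmeas, measureReal_def]
  rw [h1, h2, h3] at hold
  have habs : |∫ x, u x| ≤ ∫ x, |u x| := by
    simpa [Real.norm_eq_abs] using norm_integral_le_integral_norm u
  have hC0 : (0:ℝ) ≤ ∫ x, (u x)^2 := integral_nonneg fun x => sq_nonneg _
  have hR : ((∫ x, (u x)^2) ^ ((1:ℝ)/2) * ((volume Ω).toReal) ^ ((1:ℝ)/2)) ^ 2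
      = (volume Ω).toReal * ∫ x, (u x)^2 := by
    rw [mul_pow, ← Real.rpow_natCast ((∫ x, (u x)^2) ^ ((1:ℝ)/2)) 2,
      ← Real.rpow_natCast (((volume Ω).toReal) ^ ((1:ℝ)/2)) 2,
      ← Real.rpow_mul hC0, ← Real.rpow_mul hV0]
    norm_num [Real.rpow_one]
    ring
  calc (∫ x, u x) ^ 2 = |∫ x, u x| ^ 2 := (sq_abs _).symm
    _ ≤ (∫ x, |u x|) ^ 2 := by
        apply pow_le_pow_left₀ (abs_nonneg _) habs
    _ ≤ ((∫ x, (u x)^2) ^ ((1:ℝ)/2) * ((volume Ω).toReal) ^ ((1:ℝ)/2)) ^ 2 := by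
        apply pow_le_pow_left₀ (le_trans (abs_nonneg _) habs) hold
    _ = (volume Ω).toReal * ∫ x, (u x)^2 := hR

/-- For every bounded open set `Ω ⊂ ℝ^d`, `λ₁(Ω) · T(Ω) ≤ |Ω|`. -/
theorem lambda1_mul_torsion_le_volume (d : ℕ) (Ω : Set (EuclideanSpace ℝ (Fin d)))
    (hΩ : IsOpen Ω) (hb : Bornology.IsBounded Ω) :
    dirichletEigenvalue1 Ω * torsionalRigidity Ω ≤ (volume Ω).toReal := by
  set V : ℝ := (volume Ω).toReal with hV
  have hV0 : 0 ≤ V := ENNReal.toReal_nonneg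
  set S : Set ℝ := {r : ℝ | ∃ u : EuclideanSpace ℝ (Fin d) → ℝ, ContDiff ℝ 1 u ∧
    HasCompactSupport u ∧ tsupport u ⊆ Ω ∧
    (∫ x, (u x) ^ 2) ≠ 0 ∧ r = (∫ x, ‖fderiv ℝ u x‖ ^ 2) / (∫ x, (u x) ^ 2)} with hS
  set T : Set ℝ := {r : ℝ | ∃ u : EuclideanSpace ℝ (Fin d) → ℝ, ContDiff ℝ 1 u ∧
    HasCompactSupport u ∧ tsupport u ⊆ Ω ∧
    r = ∫ x, (‖fderiv ℝ u x‖ ^ 2 / 2 - u x)} with hT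
  have hSnn : ∀ r ∈ S, 0 ≤ r := by
    rintro r ⟨u, hu, hcs, hsup, hC, rfl⟩
    exact div_nonneg (integral_nonneg fun x => by positivity)
      (integral_nonneg fun x => sq_nonneg _)
  have hdef : dirichletEigenvalue1 Ω = sInf S := rfl
  have htors : torsionalRigidity Ω = -2 * sInf T := rfl
  have hlam0 : 0 ≤ dirichletEigenvalue1 Ω := hdef ▸ Real.sInf_nonneg hSnn
  have h0T : (0:ℝ) ∈ T := by
    refine ⟨fun _ => 0, contDiff_const, ?_, ?_, ?_⟩
    · simp [HasCompactSupport, tsupport]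
    · simp [tsupport]
    · simp
  rcases eq_or_lt_of_le hlam0 with h | hlam
  · rw [← h, zero_mul]; exact ENNReal.toReal_nonneg
  · set l : ℝ := dirichletEigenvalue1 Ω with hl
    have key : ∀ r ∈ T, -(V / (2 * l)) ≤ r := by
      rintro r ⟨u, hu, hcs, hsup, rfl⟩
      have hfcont : Continuous (fun x => ‖fderiv ℝ u x‖ ^ 2) :=
        ((ContDiff.continuous_fderiv hu one_ne_zero).norm).pow 2
      have hfsupp : HasCompactSupport (fun x => ‖fderiv ℝ u x‖ ^ 2) :=
        (hcs.fderiv (𝕜 := ℝ)).comp_left (g := fun t => ‖t‖ ^ 2) (by simp)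
      have hfi : Integrable (fun x => ‖fderiv ℝ u x‖ ^ 2) :=
        hfcont.integrable_of_hasCompactSupport hfsupp
      have hui : Integrable u := hu.continuous.integrable_of_hasCompactSupport hcs
      have hsplit : (∫ x, (‖fderiv ℝ u x‖ ^ 2 / 2 - u x))
          = (∫ x, ‖fderiv ℝ u x‖ ^ 2) / 2 - ∫ x, u x := by
        rw [integral_sub (hfi.div_const 2) hui, integral_div]
      rw [hsplit]
      set A : ℝ := ∫ x, ‖fderiv ℝ u x‖ ^ 2 with hA
      set B : ℝ := ∫ x, u x with hB
      set C : ℝ := ∫ x, (u x) ^ 2 with hC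
      have hA0 : 0 ≤ A := integral_nonneg fun x => by positivity
      have hC0 : 0 ≤ C := integral_nonneg fun x => sq_nonneg _
      have hCS : B ^ 2 ≤ V * C := cs_aux hΩ hb hu.continuous hcs hsup
      have h2l : (0:ℝ) < 2 * l := by linarith
      by_cases hCz : C = 0
      · have hB2 : B ^ 2 = 0 := le_antisymm (by rw [hCz, mul_zero] at hCS; exact hCS) (sq_nonneg B)
        have hB0 : B = 0 := pow_eq_zero_iff two_ne_zero |>.mp hB2
        rw [hB0]
        have : 0 ≤ V / (2 * l) := div_nonneg hV0 h2l.le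
        linarith
      · have hCpos : 0 < C := lt_of_le_of_ne hC0 (Ne.symm hCz)
        have hmem : A / C ∈ S := ⟨u, hu, hcs, hsup, hCz, rfl⟩
        have hlle : l ≤ A / C := hdef ▸ csInf_le ⟨0, hSnn⟩ hmem
        have hAC : l * C ≤ A := (le_div_iff₀ hCpos).mp hlle
        have hBle : B ≤ Real.sqrt V * Real.sqrt C := by
          have h1 := Real.sqrt_le_sqrt hCS
          rw [Real.sqrt_sq_eq_abs, Real.sqrt_mul hV0 C] at h1
          exact le_trans (le_abs_self B) h1
        have hsC : Real.sqrt C ^ 2 = C := Real.sq_sqrt hC0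
        have hsV : Real.sqrt V ^ 2 = V := Real.sq_sqrt hV0
        have expand : (l * Real.sqrt C - Real.sqrt V) ^ 2
            = l ^ 2 * (Real.sqrt C ^ 2) - 2 * l * (Real.sqrt V * Real.sqrt C)
              + Real.sqrt V ^ 2 := by ring
        rw [hsC, hsV] at expand
        have e1 : 0 ≤ l ^ 2 * C - 2 * l * (Real.sqrt V * Real.sqrt C) + V := by
          have := sq_nonneg (l * Real.sqrt C - Real.sqrt V)
          linarith [expand ▸ this]
        have hfin : 0 ≤ l * A - 2 * l * B + V := by
          nlinarith [e1, mul_le_mul_of_nonneg_left hBle (by linarith : (0:ℝ) ≤ 2 * l),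
            mul_le_mul_of_nonneg_left hAC hlam.le]
        have hdiv : -(A / 2 - B) ≤ V / (2 * l) := by
          rw [le_div_iff₀ h2l]
          nlinarith [hfin]
        linarith
    have hInf : -(V / (2 * l)) ≤ sInf T := le_csInf ⟨0, h0T⟩ key
    rw [htors]
    have h1 : l * (-2 * sInf T) ≤ l * (-2 * (-(V / (2 * l)))) := by
      apply mul_le_mul_of_nonneg_left _ hlam.le
      nlinarith
    have h2 : l * (-2 * (-(V / (2 * l)))) = V := by
      field_simp
    calc dirichletEigenvalue1 Ω * (-2 * sInf T) = l * (-2 * sInf T) := rfl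
      _ ≤ l * (-2 * (-(V / (2 * l)))) := h1
      _ = V := h2
end

section
/- For the test function u(x,y) = ((a² - 4y²)/8)·θ(x) on the rectangle R_{a,b} = (-b/2,b/2)×(-a/2,a/2) with 0 < a ≤ b, where θ(x) = 1 for |x| ≤ (b-a)/2 and θ(x) = (b - 2|x|)/a for (b-a)/2 < |x| < b/2, one has ∫ (|∇u|²/2 - u) dx dy = -a³b/24 + 11a⁴/360. -/
open MeasureTheory Metric Set

private lemma poly_int (p q r s t lo hi : ℝ) :
    ∫ x in lo..hi, (p + q*x + r*x^2 + s*x^3 + t*x^4) =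
      (p*hi + q/2*hi^2 + r/3*hi^3 + s/4*hi^4 + t/5*hi^5)
      - (p*lo + q/2*lo^2 + r/3*lo^3 + s/4*lo^4 + t/5*lo^5) := by
  have key : ∀ x : ℝ, HasDerivAt (fun x : ℝ => p*x + q/2*x^2 + r/3*x^3 + s/4*x^4 + t/5*x^5)
      (p + q*x + r*x^2 + s*x^3 + t*x^4) x := by
    intro x
    have h := ((((hasDerivAt_id x).const_mul p).add
      ((hasDerivAt_pow 2 x).const_mul (q/2))).add
      ((hasDerivAt_pow 3 x).const_mul (r/3))).add
      (((hasDerivAt_pow 4 x).const_mul (s/4)).add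
      ((hasDerivAt_pow 5 x).const_mul (t/5)))
    convert h using 1
    · rfl
    · rfl
    · funext y; simp only [id, Pi.add_apply]; ring
    · push_cast; ring
  rw [intervalIntegral.integral_eq_sub_of_hasDerivAt (fun x _ => key x)
    (Continuous.intervalIntegrable (by continuity) lo hi)]

private lemma inner_int (a A T : ℝ) (ha : 0 < a) :
    (∫ y in Ioo (-(a / 2)) (a / 2),
        ((((a ^ 2 - 4 * y ^ 2) / 8) ^ 2 * A + y ^ 2 * T ^ 2) / 2 -
          ((a ^ 2 - 4 * y ^ 2) / 8) * T)) =
      A * a ^ 5 / 240 + T ^ 2 * a ^ 3 / 24 - T * a ^ 3 / 12 := by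
  rw [← MeasureTheory.integral_Ioc_eq_integral_Ioo,
    ← intervalIntegral.integral_of_le (by linarith : -(a/2) ≤ a/2)]
  have h : ∀ y : ℝ, ((((a ^ 2 - 4 * y ^ 2) / 8) ^ 2 * A + y ^ 2 * T ^ 2) / 2 -
      ((a ^ 2 - 4 * y ^ 2) / 8) * T) =
      (A*a^4/128 - a^2*T/8) + 0*y + (-(A*a^2)/16 + T^2/2 + T/2)*y^2 + 0*y^3 + (A/8)*y^4 :=
    fun y => by ring
  simp only [h]
  rw [poly_int]
  ring


/-- For the test function `u(x,y) = ((a² - 4y²)/8)·θ(x)` on the rectangle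
`R_{a,b} = (-b/2,b/2)×(-a/2,a/2)` with `0 < a ≤ b`, where `θ(x) = 1` for `|x| ≤ (b-a)/2`
and `θ(x) = (b - 2|x|)/a` otherwise, one has
`∫∫ (|∇u|²/2 - u) dx dy = -a³b/24 + 11a⁴/360`.
Here `|∇u|² = ((a²-4y²)/8)² θ'(x)² + y² θ(x)²`, with `θ'(x)² = 4/a²` off the plateau. -/
theorem energy_of_rectangle_test_function (a b : ℝ) (ha : 0 < a) (hab : a ≤ b) :
    (∫ x in Ioo (-(b / 2)) (b / 2), ∫ y in Ioo (-(a / 2)) (a / 2),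
        ((((a ^ 2 - 4 * y ^ 2) / 8) ^ 2 *
            (if |x| ≤ (b - a) / 2 then (0 : ℝ) else 4 / a ^ 2) +
          y ^ 2 * (if |x| ≤ (b - a) / 2 then (1 : ℝ) else (b - 2 * |x|) / a) ^ 2) / 2 -
          ((a ^ 2 - 4 * y ^ 2) / 8) *
            (if |x| ≤ (b - a) / 2 then (1 : ℝ) else (b - 2 * |x|) / a))) =
      -(a ^ 3 * b) / 24 + 11 * a ^ 4 / 360 := by
  have ha' : a ≠ 0 := ne_of_gt ha
  set c : ℝ := (b - a) / 2 with hc_def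
  have hc0 : 0 ≤ c := by simp only [hc_def]; linarith
  have hcb : c ≤ b / 2 := by simp only [hc_def]; linarith
  have hb0 : (0:ℝ) < b := lt_of_lt_of_le ha hab
  set g : ℝ → ℝ := fun x =>
    (if |x| ≤ c then (0 : ℝ) else 4 / a ^ 2) * a ^ 5 / 240 +
      (if |x| ≤ c then (1 : ℝ) else (b - 2 * |x|) / a) ^ 2 * a ^ 3 / 24 -
      (if |x| ≤ c then (1 : ℝ) else (b - 2 * |x|) / a) * a ^ 3 / 12 with hg_def
  have hinner : ∀ x : ℝ,
      (∫ y in Ioo (-(a / 2)) (a / 2),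
        ((((a ^ 2 - 4 * y ^ 2) / 8) ^ 2 *
            (if |x| ≤ c then (0 : ℝ) else 4 / a ^ 2) +
          y ^ 2 * (if |x| ≤ c then (1 : ℝ) else (b - 2 * |x|) / a) ^ 2) / 2 -
          ((a ^ 2 - 4 * y ^ 2) / 8) *
            (if |x| ≤ c then (1 : ℝ) else (b - 2 * |x|) / a))) = g x := by
    intro x
    rw [hg_def]
    exact inner_int a _ _ ha
  simp only [hinner]
  rw [← MeasureTheory.integral_Ioc_eq_integral_Ioo,
    ← intervalIntegral.integral_of_le (by linarith : -(b/2) ≤ b/2)]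
  -- the three polynomial pieces
  set pL : ℝ := a^3/60 + a*b^2/24 - a^2*b/12 with hpL
  set qL : ℝ := a*b/6 - a^2/6 with hqL
  set rL : ℝ := a/6 with hrL
  set pM : ℝ := a^3/24 - a^3/12 with hpM
  set qR : ℝ := a^2/6 - a*b/6 with hqR
  -- a.e. identities on each piece
  have haeL : ∀ᵐ x : ℝ, x ∈ Set.uIoc (-(b/2)) (-c) →
      g x = pL + qL*x + rL*x^2 + 0*x^3 + 0*x^4 := by
    have hne : ∀ᵐ x : ℝ, x ≠ -c := by
      rw [MeasureTheory.ae_iff]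
      simp
    filter_upwards [hne] with x hxne hx
    rw [uIoc_of_le (by linarith : -(b/2) ≤ -c)] at hx
    have hx1 : x < -c := lt_of_le_of_ne hx.2 hxne
    have habs : |x| = -x := abs_of_neg (by linarith)
    rw [hg_def]
    simp only [habs, if_neg (by linarith : ¬ -x ≤ c)]
    field_simp
    ring
  have haeM : ∀ᵐ x : ℝ, x ∈ Set.uIoc (-c) c →
      g x = pM + 0*x + 0*x^2 + 0*x^3 + 0*x^4 := by
    filter_upwards with x hx
    rw [uIoc_of_le (by linarith : -c ≤ c)] at hx
    have habs : |x| ≤ c := abs_le.mpr ⟨le_of_lt hx.1, hx.2⟩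
    rw [hg_def]
    simp only [if_pos habs]
    ring
  have haeR : ∀ᵐ x : ℝ, x ∈ Set.uIoc c (b/2) →
      g x = pL + qR*x + rL*x^2 + 0*x^3 + 0*x^4 := by
    filter_upwards with x hx
    rw [uIoc_of_le hcb] at hx
    have habs : |x| = x := abs_of_pos (lt_of_le_of_lt hc0 hx.1)
    rw [hg_def]
    simp only [habs, if_neg (not_le.mpr hx.1)]
    field_simp
    ring
  -- integrability on each piece
  have hintL : IntervalIntegrable g volume (-(b/2)) (-c) := by
    have hp : IntervalIntegrable (fun x : ℝ => pL + qL*x + rL*x^2 + 0*x^3 + 0*x^4)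
        volume (-(b/2)) (-c) := Continuous.intervalIntegrable (by fun_prop) _ _
    refine hp.congr_ae ((ae_restrict_iff' measurableSet_uIoc).mpr ?_)
    filter_upwards [haeL] with x h hx
    exact (h hx).symm
  have hintM : IntervalIntegrable g volume (-c) c := by
    have hp : IntervalIntegrable (fun x : ℝ => pM + 0*x + 0*x^2 + 0*x^3 + 0*x^4)
        volume (-c) c := Continuous.intervalIntegrable (by fun_prop) _ _
    refine hp.congr_ae ((ae_restrict_iff' measurableSet_uIoc).mpr ?_)
    filter_upwards [haeM] with x h hx
    exact (h hx).symm
  have hintR : IntervalIntegrable g volume c (b/2) := by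
    have hp : IntervalIntegrable (fun x : ℝ => pL + qR*x + rL*x^2 + 0*x^3 + 0*x^4)
        volume c (b/2) := Continuous.intervalIntegrable (by fun_prop) _ _
    refine hp.congr_ae ((ae_restrict_iff' measurableSet_uIoc).mpr ?_)
    filter_upwards [haeR] with x h hx
    exact (h hx).symm
  have hsplit : (∫ x in (-(b/2))..(b/2), g x) =
      (∫ x in (-(b/2))..(-c), g x) + (∫ x in (-c)..c, g x) + (∫ x in c..(b/2), g x) := by
    rw [intervalIntegral.integral_add_adjacent_intervals hintL hintM,
      intervalIntegral.integral_add_adjacent_intervals (hintL.trans hintM) hintR]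
  rw [hsplit,
    intervalIntegral.integral_congr_ae haeL,
    intervalIntegral.integral_congr_ae haeM,
    intervalIntegral.integral_congr_ae haeR,
    poly_int, poly_int, poly_int]
  rw [hpL, hqL, hrL, hpM, hqR, hc_def]
  ring
end
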